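/- arXiv:2106.11146 — 2 statements merged into one kernel-verified Lean document; each statement's English description precedes it below -/
import Mathlib

section
/- Let C be a binary self-dual code with automorphism σ of type pr-(t₁; 0), p, r odd primes. If u ∈ F_σ(C) (the fixed subcode) and v ∈ E_σ(C) (the subcode of codewords with even weight on each cycle of σ), then both ⟨u,v⟩ ≡ 0 and ⟨v,u⟩ ≡ 0 modulo x^{pr}−1, where ⟨u,v⟩ = Σᵢ uᵢ(x)vᵢ(x⁻¹). -/
open Polynomial AdjoinRoot

abbrev Rq (N : ℕ) : Type := AdjoinRoot (X ^ N - 1 : Polynomial (ZMod 2))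

noncomputable def cyclePoly {t N : ℕ} (v : Fin t × Fin N → ZMod 2) (i : Fin t) : Rq N :=
  ∑ j : Fin N, algebraMap (ZMod 2) (Rq N) (v (i, j)) *
    (root (X ^ N - 1 : Polynomial (ZMod 2))) ^ (j : ℕ)

noncomputable def cyclePolyInv {t N : ℕ} (v : Fin t × Fin N → ZMod 2) (i : Fin t) : Rq N :=
  ∑ j : Fin N, algebraMap (ZMod 2) (Rq N) (v (i, j)) *
    ((root (X ^ N - 1 : Polynomial (ZMod 2))) ^ (N - 1)) ^ (j : ℕ)

noncomputable def polyInner {t N : ℕ} (u v : Fin t × Fin N → ZMod 2) : Rq N :=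
  ∑ i : Fin t, cyclePoly u i * cyclePolyInv v i

def IsSelfDual {ι : Type*} [Fintype ι] (C : Submodule (ZMod 2) (ι → ZMod 2)) : Prop :=
  ∀ v, v ∈ C ↔ ∀ u ∈ C, ∑ k, u k * v k = 0

def cycShift {t N : ℕ} [NeZero N] (v : Fin t × Fin N → ZMod 2) :
    Fin t × Fin N → ZMod 2 :=
  fun q => v (q.1, q.2 - 1)

/-- If `z ^ N = 1`, `w` is a power of `z`, and the coefficients `a` sum to zero, then
the "polynomial" in `w` with coefficients `a` annihilates the all-one polynomial in `z`. -/
lemma key (N : ℕ) (z w : Rq N) (hz : z ^ N = 1) (hw : ∃ k, w = z ^ k)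
    (a : Fin N → ZMod 2) (ha : ∑ j, a j = 0) :
    (∑ j : Fin N, algebraMap (ZMod 2) (Rq N) (a j) * w ^ (j : ℕ)) *
      (∑ j : Fin N, z ^ (j : ℕ)) = 0 := by
  obtain ⟨k, rfl⟩ := hw
  set S : Rq N := ∑ j : Fin N, z ^ (j : ℕ) with hSdef
  have h1 : S = ∑ i ∈ Finset.range N, z ^ i := by
    rw [hSdef, Fin.sum_univ_eq_sum_range]
  have hSz : S * z = S := by
    have h2 : S * (z - 1) = 0 := by rw [h1, geom_sum_mul, hz, sub_self]
    linear_combination h2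
  have hSpow : ∀ m, S * z ^ m = S := by
    intro m
    induction m with
    | zero => simp
    | succ n ih => rw [pow_succ, ← mul_assoc, ih, hSz]
  rw [Finset.sum_mul]
  have hterm : ∀ j : Fin N,
      algebraMap (ZMod 2) (Rq N) (a j) * (z ^ k) ^ (j : ℕ) * S
        = algebraMap (ZMod 2) (Rq N) (a j) * S := by
    intro j
    rw [mul_assoc, ← pow_mul, mul_comm ((z : Rq N) ^ (k * (j : ℕ))) S, hSpow]
  rw [Finset.sum_congr rfl (fun j _ => hterm j), ← Finset.sum_mul, ← map_sum, ha,
    map_zero, zero_mul]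

open Fin.NatCast Fin.CommRing

theorem stmt2 (p r t : ℕ) (hp : p.Prime) (hr : r.Prime) (hpo : Odd p) (hro : Odd r)
    [NeZero (p * r)]
    (C : Submodule (ZMod 2) (Fin t × Fin (p * r) → ZMod 2))
    (hsd : IsSelfDual C)
    (hauto : ∀ v, v ∈ C ↔ cycShift v ∈ C)
    (u : Fin t × Fin (p * r) → ZMod 2) (hu : u ∈ C) (hufix : cycShift u = u)
    (v : Fin t × Fin (p * r) → ZMod 2) (hv : v ∈ C)
    (hveven : ∀ i, ∑ j, v (i, j) = 0) :
    polyInner u v = 0 ∧ polyInner v u = 0 := by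
  have hx : (root (X ^ (p * r) - 1 : Polynomial (ZMod 2))) ^ (p * r) = 1 := by
    have h : AdjoinRoot.mk (X ^ (p * r) - 1 : Polynomial (ZMod 2)) (X ^ (p * r) - 1) = 0 :=
      AdjoinRoot.mk_self
    rw [map_sub, map_pow, map_one, mk_X] at h
    exact sub_eq_zero.mp h
  have h4 : 4 ≤ p * r := by
    calc 4 = 2 * 2 := rfl
      _ ≤ p * r := Nat.mul_le_mul hp.two_le hr.two_le
  have hy : ((root (X ^ (p * r) - 1 : Polynomial (ZMod 2))) ^ (p * r - 1)) ^ (p * r) = 1 := by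
    rw [← pow_mul, mul_comm (p * r - 1) (p * r),
      pow_mul (root (X ^ (p * r) - 1 : Polynomial (ZMod 2))) (p * r) (p * r - 1), hx, one_pow]
  have harith : (p * r - 1) * (p * r - 1) = p * r * (p * r - 2) + 1 := by
    obtain ⟨M, hM⟩ : ∃ M, p * r = M + 2 := ⟨p * r - 2, by omega⟩
    rw [hM]
    have e1 : M + 2 - 1 = M + 1 := rfl
    have e2 : M + 2 - 2 = M := rfl
    rw [e1, e2]; ring
  have hxy : root (X ^ (p * r) - 1 : Polynomial (ZMod 2)) =
      ((root (X ^ (p * r) - 1 : Polynomial (ZMod 2))) ^ (p * r - 1)) ^ (p * r - 1) := by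
    rw [← pow_mul, harith,
      pow_succ (root (X ^ (p * r) - 1 : Polynomial (ZMod 2))) (p * r * (p * r - 2)),
      pow_mul (root (X ^ (p * r) - 1 : Polynomial (ZMod 2))) (p * r) (p * r - 2),
      hx, one_pow, one_mul]
  -- u is constant on each cycle
  have hnat : ∀ (i : Fin t) (k : ℕ), u (i, (k : Fin (p * r))) = u (i, 0) := by
    intro i k
    induction k with
    | zero => simp
    | succ n ih =>
      have h := congrFun hufix (i, ((n + 1 : ℕ) : Fin (p * r)))
      simp only [cycShift] at h
      have hcast : ((n + 1 : ℕ) : Fin (p * r)) - 1 = (n : Fin (p * r)) := by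
        push_cast
        ring
      rw [hcast] at h
      rw [← h, ih]
  have hconst : ∀ (i : Fin t) (j : Fin (p * r)), u (i, j) = u (i, 0) := by
    intro i j
    have := hnat i (j : ℕ)
    rwa [Fin.cast_val_eq_self] at this
  constructor
  · unfold polyInner cyclePoly cyclePolyInv
    apply Finset.sum_eq_zero
    intro i _
    have h0 := key (p * r) (root (X ^ (p * r) - 1 : Polynomial (ZMod 2)))
      ((root (X ^ (p * r) - 1 : Polynomial (ZMod 2))) ^ (p * r - 1)) hx ⟨p * r - 1, rfl⟩
      (fun j => v (i, j)) (hveven i)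
    simp only [hconst i]
    rw [← Finset.mul_sum]
    linear_combination (algebraMap (ZMod 2) (Rq (p * r)) (u (i, 0))) * h0
  · unfold polyInner cyclePoly cyclePolyInv
    apply Finset.sum_eq_zero
    intro i _
    have h0 := key (p * r) ((root (X ^ (p * r) - 1 : Polynomial (ZMod 2))) ^ (p * r - 1))
      (root (X ^ (p * r) - 1 : Polynomial (ZMod 2))) hy ⟨p * r - 1, hxy⟩
      (fun j => v (i, j)) (hveven i)
    simp only [hconst i]
    rw [← Finset.mul_sum]
    linear_combination (algebraMap (ZMod 2) (Rq (p * r)) (u (i, 0))) * h0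
end

section
/- Let C be a binary self-dual [n, n/2] code and σ an automorphism of C of odd order. Then C = F_σ(C) ⊕ E_σ(C), i.e., every codeword decomposes uniquely as a sum of a σ-fixed codeword and a codeword whose restriction to each σ-orbit has even weight. -/
open Polynomial AdjoinRoot

open scoped Classical in
lemma orbitCard_odd {n : ℕ} (π : Equiv.Perm (Fin n)) (hord : Odd (orderOf π)) (a : Fin n) :
    Odd (Finset.univ.filter (fun b => π.SameCycle a b)).card := by
  have key : (Finset.univ.filter (fun b => π.SameCycle a b)).card ∣ orderOf π := by
    have hset : (Finset.univ.filter (fun b => π.SameCycle a b) : Finset (Fin n)) =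
        (MulAction.orbit (Subgroup.zpowers π) a).toFinset := by
      ext b
      simp only [Finset.mem_filter, Finset.mem_univ, true_and, Set.mem_toFinset,
        MulAction.mem_orbit_iff]
      constructor
      · rintro ⟨i, hi⟩
        exact ⟨⟨π ^ i, Subgroup.zpow_mem _ (Subgroup.mem_zpowers π) i⟩, hi⟩
      · rintro ⟨⟨g, hg⟩, hgb⟩
        obtain ⟨i, rfl⟩ := Subgroup.mem_zpowers_iff.mp hg
        exact ⟨i, hgb⟩
    rw [hset, Set.toFinset_card]
    have := MulAction.card_orbit_mul_card_stabilizer_eq_card_group (Subgroup.zpowers π) a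
    rw [Fintype.card_zpowers] at this
    exact ⟨_, this.symm⟩
  rcases key with ⟨m, hm⟩
  rw [hm] at hord
  exact (Nat.odd_mul.mp hord).1

lemma odd_cast_eq_one {m : ℕ} (hm : Odd m) : (m : ZMod 2) = 1 := by
  obtain ⟨j, rfl⟩ := hm
  push_cast
  rw [show (2 : ZMod 2) = 0 by decide]
  ring

open scoped Classical in
theorem stmt16 (n : ℕ) (C : Submodule (ZMod 2) (Fin n → ZMod 2))
    (hsd : IsSelfDual C)
    (π : Equiv.Perm (Fin n)) (hord : Odd (orderOf π))
    (hauto : ∀ v : Fin n → ZMod 2, v ∈ C ↔ (v ∘ π) ∈ C) :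
    ∀ c ∈ C, ∃! fe : (Fin n → ZMod 2) × (Fin n → ZMod 2),
      fe.1 ∈ C ∧ fe.1 ∘ π = fe.1 ∧
      fe.2 ∈ C ∧
      (∀ a : Fin n,
        ∑ b ∈ Finset.univ.filter (fun b => π.SameCycle a b), fe.2 b = 0) ∧
      c = fe.1 + fe.2 := by
  intro c hc
  set L := orderOf π with hLdef
  have hL1 : π ^ L = 1 := pow_orderOf_eq_one π
  have hcancel : ∀ x y : ZMod 2, x + y = 0 → x = y := by decide
  have hselfadd : ∀ x : ZMod 2, x + x = 0 := by decide
  -- shifts stay in C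
  have hshift : ∀ v : Fin n → ZMod 2, v ∈ C → ∀ k : ℕ, (fun a => v ((π ^ k) a)) ∈ C := by
    intro v hv k
    induction k with
    | zero => simpa using hv
    | succ k ih =>
      have h2 := (hauto (fun a => v ((π ^ k) a))).mp ih
      have heq : ((fun a => v ((π ^ k) a)) ∘ π) = fun a => v ((π ^ (k + 1)) a) := by
        funext a; simp [pow_succ, Equiv.Perm.mul_apply]
      rwa [heq] at h2
  set F : (Fin n → ZMod 2) → (Fin n → ZMod 2) :=
    fun v a => ∑ k ∈ Finset.range L, v ((π ^ k) a) with hFdef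
  have hFC : ∀ v ∈ C, F v ∈ C := by
    intro v hv
    have hsum : F v = ∑ k ∈ Finset.range L, (fun a => v ((π ^ k) a)) := by
      funext a; simp [hFdef, Finset.sum_apply]
    rw [hsum]
    exact Submodule.sum_mem _ fun k _ => hshift v hv k
  have hFfix : ∀ v : Fin n → ZMod 2, F v ∘ π = F v := by
    intro v; funext a
    have key : (∑ k ∈ Finset.range L, v ((π ^ (k + 1)) a)) + v ((π ^ 0) a)
        = (∑ k ∈ Finset.range L, v ((π ^ k) a)) + v ((π ^ L) a) := by
      rw [← Finset.sum_range_succ' (fun k => v ((π ^ k) a)) L, Finset.sum_range_succ]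
    rw [hL1] at key
    simp only [pow_zero, Equiv.Perm.one_apply, Equiv.Perm.coe_one, id_eq] at key
    have key2 : (∑ k ∈ Finset.range L, v ((π ^ (k + 1)) a))
        = ∑ k ∈ Finset.range L, v ((π ^ k) a) := add_right_cancel key
    show F v (π a) = F v a
    calc F v (π a) = ∑ k ∈ Finset.range L, v ((π ^ (k + 1)) a) := by
          simp [hFdef, pow_succ, Equiv.Perm.mul_apply]
      _ = _ := key2
  set O : Fin n → Finset (Fin n) :=
    fun a => Finset.univ.filter (fun b => π.SameCycle a b) with hOdef
  have hOshift : ∀ (v : Fin n → ZMod 2) (a : Fin n) (k : ℕ),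
      ∑ b ∈ O a, v ((π ^ k) b) = ∑ b ∈ O a, v b := by
    intro v a k
    apply Finset.sum_equiv (π ^ k)
    · intro b
      simp only [hOdef, Finset.mem_filter, Finset.mem_univ, true_and]
      exact (Equiv.Perm.sameCycle_pow_right).symm
    · intro b _; rfl
  have hOF : ∀ (v : Fin n → ZMod 2) (a : Fin n), ∑ b ∈ O a, F v b = ∑ b ∈ O a, v b := by
    intro v a
    have hcomm : ∑ b ∈ O a, F v b = ∑ k ∈ Finset.range L, ∑ b ∈ O a, v ((π ^ k) b) := by
      simp only [hFdef]
      exact Finset.sum_comm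
    rw [hcomm]
    simp_rw [hOshift v a]
    rw [Finset.sum_const, Finset.card_range, nsmul_eq_mul, odd_cast_eq_one hord, one_mul]
  -- constancy on cycles for π-fixed vectors
  have hconst : ∀ (d : Fin n → ZMod 2), d ∘ π = d → ∀ a b, π.SameCycle a b → d b = d a := by
    intro d hd a b hab
    have hstep : ∀ k : ℕ, ∀ x, d ((π ^ k) x) = d x := by
      intro k
      induction k with
      | zero => intro x; simp
      | succ k ih =>
        intro x
        have : (π ^ (k + 1)) x = (π ^ k) (π x) := by
          rw [pow_succ]; rfl
        rw [this, ih]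
        exact congrFun hd x
    obtain ⟨i, _, hi⟩ := hab.exists_pow_eq'
    rw [← hi, hstep]
  -- key uniqueness fact: fixed + zero orbit sums → zero
  have hzero : ∀ d : Fin n → ZMod 2, d ∘ π = d →
      (∀ a, ∑ b ∈ O a, d b = 0) → d = 0 := by
    intro d hd hsums
    funext a
    have h1 : ∑ b ∈ O a, d b = (O a).card • d a := by
      rw [← Finset.sum_const]
      exact Finset.sum_congr rfl fun b hb => by
        have : π.SameCycle a b := (Finset.mem_filter.mp hb).2
        exact hconst d hd a b this
    have h2 := hsums a
    rw [h1, nsmul_eq_mul, odd_cast_eq_one (orbitCard_odd π hord a), one_mul] at h2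
    exact h2
  refine ⟨(F c, c + F c), ⟨hFC c hc, hFfix c, C.add_mem hc (hFC c hc), ?_, ?_⟩, ?_⟩
  · -- orbit sums of c + F c vanish
    intro a
    have : ∑ b ∈ O a, (c + F c) b = (∑ b ∈ O a, c b) + ∑ b ∈ O a, F c b := by
      simp [Finset.sum_add_distrib]
    rw [this, hOF c a, hselfadd]
  · -- c = F c + (c + F c)
    funext a
    show c a = F c a + (c a + F c a)
    have h := hselfadd (F c a)
    have : F c a + (c a + F c a) = c a + (F c a + F c a) := by ring
    rw [this, h, add_zero]
  · -- uniqueness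
    rintro ⟨f₁, e₁⟩ ⟨hf₁C, hf₁fix, he₁C, he₁sums, hdecomp⟩
    have hd : (f₁ + F c) ∘ π = f₁ + F c := by
      funext a
      show f₁ (π a) + F c (π a) = f₁ a + F c a
      have h1 : f₁ (π a) = f₁ a := congrFun hf₁fix a
      have h2 : F c (π a) = F c a := congrFun (hFfix c) a
      rw [h1, h2]
    have hdsums : ∀ a, ∑ b ∈ O a, (f₁ + F c) b = 0 := by
      intro a
      have hf1 : f₁ = c + e₁ := by
        funext x
        have hx : c x = f₁ x + e₁ x := congrFun hdecomp x
        calc f₁ x = f₁ x + 0 := by rw [add_zero]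
          _ = f₁ x + (e₁ x + e₁ x) := by rw [hselfadd]
          _ = (f₁ x + e₁ x) + e₁ x := by ring
          _ = c x + e₁ x := by rw [← hx]
      rw [hf1]
      have : ∑ b ∈ O a, (c + e₁ + F c) b
          = (∑ b ∈ O a, c b) + (∑ b ∈ O a, e₁ b) + ∑ b ∈ O a, F c b := by
        simp [Finset.sum_add_distrib]
      rw [this, he₁sums a, add_zero, hOF c a, hselfadd]
    have hdz := hzero (f₁ + F c) hd hdsums
    have hf : f₁ = F c := by
      funext x
      exact hcancel _ _ (congrFun hdz x)
    have he : e₁ = c + F c := by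
      funext x
      have hx : c x = f₁ x + e₁ x := congrFun hdecomp x
      show e₁ x = c x + F c x
      rw [hx, ← congrFun hf x]
      have := hselfadd (f₁ x)
      calc e₁ x = 0 + e₁ x := by rw [zero_add]
        _ = (f₁ x + f₁ x) + e₁ x := by rw [this]
        _ = f₁ x + e₁ x + f₁ x := by ring
    exact Prod.ext hf he
end
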